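/- Let q ≥ 2 be an integer, let 0 < x₀ ≤ A be reals, let γ > 0, and let (x_t)_{t∈ℕ} be a nondecreasing sequence of reals with x₀ as its initial term such that x_{t+1} ≥ x_t + γ·x_t^q for every t with x_t < A. Then there exists t ∈ ℕ with t ≤ 2/(γ·x₀^{q−1}) + log₂(A/x₀) + 2 and x_t ≥ A. -/

import Mathlib

set_option maxHeartbeats 1600000 in
/-- Escape-time bound for a tensor-power-method-type recursion: a nondecreasing
sequence with `x_{t+1} ≥ x_t + γ x_t^q` whenever `x_t < A` reaches `A` within
`2/(γ x₀^{q-1}) + log₂(A/x₀) + 2` steps. -/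
theorem tpm_escape_time (q : ℕ) (hq : 2 ≤ q) (x₀ A γ : ℝ)
    (hx₀ : 0 < x₀) (hx₀A : x₀ ≤ A) (hγ : 0 < γ)
    (x : ℕ → ℝ) (hx0 : x 0 = x₀) (hmono : Monotone x)
    (hrec : ∀ t, x t < A → x t + γ * x t ^ q ≤ x (t + 1)) :
    ∃ t : ℕ, (t : ℝ) ≤ 2 / (γ * x₀ ^ (q - 1)) + Real.logb 2 (A / x₀) + 2 ∧
      A ≤ x t := by
  set c := γ * x₀ ^ (q - 1) with hc
  have hx₀q : (0:ℝ) < x₀ ^ (q-1) := pow_pos hx₀ _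
  have hcpos : 0 < c := mul_pos hγ hx₀q
  -- phase lemma: as long as we haven't escaped, each step adds at least γ y^q
  have phase : ∀ (t₀ m : ℕ) (y : ℝ), 0 < y → y ≤ x t₀ →
      (∃ s, s ≤ t₀ + m ∧ A ≤ x s) ∨ x t₀ + m * (γ * y ^ q) ≤ x (t₀ + m) := by
    intro t₀ m y hy hty
    induction m with
    | zero => right; simp
    | succ m ih =>
      rcases ih with ⟨s, hs, hsA⟩ | h
      · exact Or.inl ⟨s, by omega, hsA⟩
      · rcases le_or_gt A (x (t₀ + m)) with hA | hA
        · exact Or.inl ⟨t₀ + m, by omega, hA⟩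
        · right
          have h1 := hrec (t₀ + m) hA
          have h2 : y ^ q ≤ x (t₀ + m) ^ q :=
            pow_le_pow_left₀ hy.le (hty.trans (hmono (Nat.le_add_right _ _))) q
          have h3 : x (t₀ + (m+1)) = x (t₀ + m + 1) := by ring_nf
          rw [h3]
          push_cast
          nlinarith
  -- main induction on the number of doublings
  have main : ∀ k : ℕ, ∃ t : ℕ,
      (t : ℝ) ≤ k + (1/c) * ∑ j ∈ Finset.range k, (1/2:ℝ)^j ∧
      (A ≤ x t ∨ 2^k * x₀ ≤ x t) := by
    intro k
    induction k with
    | zero => exact ⟨0, by simp, Or.inr (by simp [hx0])⟩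
    | succ k ih =>
      obtain ⟨t, htb, ht⟩ := ih
      have hsumnn : (0:ℝ) ≤ (1/2:ℝ)^k := by positivity
      have hsum : (∑ j ∈ Finset.range (k+1), (1/2:ℝ)^j)
          = (∑ j ∈ Finset.range k, (1/2:ℝ)^j) + (1/2)^k := Finset.sum_range_succ _ _
      rcases ht with hA | hyt
      · refine ⟨t, ?_, Or.inl hA⟩
        rw [hsum]
        push_cast
        nlinarith [mul_le_mul_of_nonneg_left hsumnn (by positivity : (0:ℝ) ≤ 1/c)]
      · set y : ℝ := 2^k * x₀ with hy
        have hypos : 0 < y := by positivity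
        have hgy : 0 < γ * y ^ (q-1) := by positivity
        set m : ℕ := ⌈1 / (γ * y ^ (q-1))⌉₊ with hm
        have hmge : 1 / (γ * y ^ (q-1)) ≤ (m:ℝ) := Nat.le_ceil _
        have hmlt : (m:ℝ) < 1 / (γ * y ^ (q-1)) + 1 :=
          Nat.ceil_lt_add_one (by positivity)
        -- γ y^{q-1} = c * (2^k)^{q-1} ≥ c * 2^k
        have hkey : c * 2^k ≤ γ * y ^ (q-1) := by
          have h1 : y ^ (q-1) = (2:ℝ)^(k*(q-1)) * x₀ ^ (q-1) := by
            rw [hy, mul_pow, ← pow_mul]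
          have h2 : (2:ℝ)^k ≤ (2:ℝ)^(k*(q-1)) := by
            apply pow_le_pow_right₀ one_le_two
            have : 1 ≤ q - 1 := by omega
            calc k = k * 1 := (mul_one k).symm
              _ ≤ k * (q-1) := Nat.mul_le_mul_left k this
          rw [h1, hc]
          nlinarith
        have hinv : 1 / (γ * y ^ (q-1)) ≤ (1/c) * (1/2:ℝ)^k := by
          rw [div_le_iff₀ hgy]
          have h2k : (0:ℝ) < 2^k := by positivity
          have : (1/c) * (1/2:ℝ)^k * (c * 2^k) = 1 := by
            field_simp
            rw [← mul_pow]; norm_num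
          nlinarith [mul_le_mul_of_nonneg_left hkey
            (by positivity : (0:ℝ) ≤ (1/c) * (1/2:ℝ)^k)]
        have hmle : (m:ℝ) ≤ (1/c) * (1/2:ℝ)^k + 1 := by linarith
        have hmy : y ≤ m * (γ * y ^ q) := by
          have hpow : y ^ q = y ^ (q-1) * y := by
            rw [← pow_succ]; congr 1; omega
          rw [div_le_iff₀ hgy] at hmge
          rw [hpow]
          nlinarith
        rcases phase t m y hypos hyt with ⟨s, hs, hsA⟩ | h
        · refine ⟨s, ?_, Or.inl hsA⟩
          have hsr : (s:ℝ) ≤ (t:ℝ) + m := by exact_mod_cast Nat.cast_le.2 hs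
          rw [hsum]
          push_cast
          push_cast at hsr
          nlinarith
        · refine ⟨t + m, ?_, Or.inr ?_⟩
          · rw [hsum]
            have hcast : ((t + m : ℕ):ℝ) = (t:ℝ) + (m:ℝ) := by push_cast; ring
            have hrng : (1/c) * ((∑ j ∈ Finset.range k, (1/2:ℝ)^j) + (1/2:ℝ)^k)
                = (1/c) * (∑ j ∈ Finset.range k, (1/2:ℝ)^j) + (1/c) * (1/2:ℝ)^k := by
              ring
            rw [hcast]
            push_cast
            linarith
          · have h2 : (2:ℝ)^(k+1) * x₀ = y + y := by rw [hy]; ring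
            rw [h2]
            linarith
  -- assemble
  have hApos : 0 < A := lt_of_lt_of_le hx₀ hx₀A
  have hdiv : (1:ℝ) ≤ A / x₀ := (one_le_div hx₀).2 hx₀A
  have hdivpos : 0 < A / x₀ := lt_of_lt_of_le one_pos hdiv
  have hlognn : 0 ≤ Real.logb 2 (A / x₀) := Real.logb_nonneg one_lt_two hdiv
  set N : ℕ := ⌈Real.logb 2 (A / x₀)⌉₊ with hN
  obtain ⟨t, htb, ht⟩ := main N
  have hNle : (N:ℝ) ≤ Real.logb 2 (A / x₀) + 1 :=
    le_of_lt (Nat.ceil_lt_add_one hlognn)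
  have hsum2 : (∑ j ∈ Finset.range N, (1/2:ℝ)^j) ≤ 2 := by
    rw [geom_sum_eq (by norm_num : (1/2:ℝ) ≠ 1)]
    have : (0:ℝ) ≤ (1/2:ℝ)^N := by positivity
    rw [div_le_iff_of_neg (by norm_num : (1/2:ℝ) - 1 < 0)]
    linarith
  have htbound : (t:ℝ) ≤ 2 / c + Real.logb 2 (A / x₀) + 2 := by
    have h1 : (1/c) * (∑ j ∈ Finset.range N, (1/2:ℝ)^j) ≤ 2 / c := by
      rw [div_eq_mul_one_div 2 c]
      nlinarith [mul_le_mul_of_nonneg_left hsum2 (by positivity : (0:ℝ) ≤ 1/c)]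
    nlinarith
  have hAle : A ≤ 2^N * x₀ := by
    have h1 : A / x₀ = (2:ℝ) ^ (Real.logb 2 (A/x₀)) :=
      (Real.rpow_logb (by norm_num) (by norm_num) hdivpos).symm
    have h2 : (2:ℝ) ^ (Real.logb 2 (A/x₀)) ≤ (2:ℝ) ^ (N:ℝ) :=
      Real.rpow_le_rpow_of_exponent_le one_le_two (Nat.le_ceil _)
    have h3 : (2:ℝ) ^ (N:ℝ) = (2:ℝ)^N := Real.rpow_natCast 2 N
    rw [h3] at h2
    have h4 : A / x₀ ≤ (2:ℝ)^N := h1 ▸ h2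
    calc A = (A / x₀) * x₀ := by field_simp
      _ ≤ (2:ℝ)^N * x₀ := mul_le_mul_of_nonneg_right h4 hx₀.le
  refine ⟨t, htbound, ?_⟩
  rcases ht with hA | hyt
  · exact hA
  · exact hAle.trans hyt
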